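/- Let the policy be parametrized by θ ∈ ℝ via p : ℝ → X → ℝ with 0 ≤ p θ x ≤ 1 for all θ, x, and with θ ↦ p θ x differentiable for every x. Then for every n ∈ ℕ, x ∈ X, and θ ∈ ℝ, the value function θ ↦ V n θ x is differentiable and its derivative satisfies the finite-horizon policy gradient formula: d/dθ [V n θ x] = ∑_{k=0}^{n−1} ∑_{x'} ρ_θ^k(x,x') · (d/dθ [p θ x']) · (Q (n−k) θ x' true − Q (n−k) θ x' false), where Q m θ x d = ∑_{x'} P x d x' · (g x x' + V (m−1) θ x') is the action value function. -/

import Mathlib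

open Finset

/-- finite-horizon policy gradient formula. For a policy
parametrized by `θ ∈ ℝ`, the value function `θ ↦ V n θ x` is differentiable
with derivative
`∑_{k<n} ∑_{x'} ρ_θ^k(x,x') · (d/dθ p θ x') · (Q (n−k) θ x' true − Q (n−k) θ x' false)`. -/
theorem policy_gradient {X : Type*} [Fintype X] [Nonempty X] [DecidableEq X]
    -- transition kernel (independent of θ)
    (P : X → Bool → X → ℝ)
    (hPnonneg : ∀ (x : X) (d : Bool) (x' : X), 0 ≤ P x d x')
    (hPsum : ∀ (x : X) (d : Bool), ∑ x', P x d x' = 1)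
    -- parametrized policy
    (p : ℝ → X → ℝ)
    (hp0 : ∀ (θ : ℝ) (x : X), 0 ≤ p θ x) (hp1 : ∀ (θ : ℝ) (x : X), p θ x ≤ 1)
    (hpdiff : ∀ x : X, Differentiable ℝ (fun θ => p θ x))
    -- qualification gain function
    (g : X → X → ℝ)
    -- one-step mixed kernel and k-step kernels, parametrized by θ
    (ρ : ℝ → X → X → ℝ)
    (hρ : ∀ (θ : ℝ) (x x' : X),
      ρ θ x x' = (1 - p θ x) * P x false x' + p θ x * P x true x')
    (ρk : ℝ → ℕ → X → X → ℝ)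
    (hρk0 : ∀ (θ : ℝ) (x x' : X), ρk θ 0 x x' = if x = x' then 1 else 0)
    (hρkS : ∀ (θ : ℝ) (k : ℕ) (x x' : X),
      ρk θ (k + 1) x x' = ∑ y, ρ θ x y * ρk θ k y x')
    -- finite-horizon state value function
    (V : ℕ → ℝ → X → ℝ) (hV0 : ∀ (θ : ℝ) (x : X), V 0 θ x = 0)
    (hVS : ∀ (n : ℕ) (θ : ℝ) (x : X), V (n + 1) θ x
      = ∑ d : Bool, (if d then p θ x else 1 - p θ x)
          * ∑ x', P x d x' * (g x x' + V n θ x'))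
    -- action value function
    (Q : ℕ → ℝ → X → Bool → ℝ)
    (hQ : ∀ (m : ℕ) (θ : ℝ) (x : X) (d : Bool),
      Q m θ x d = ∑ x', P x d x' * (g x x' + V (m - 1) θ x')) :
    ∀ (n : ℕ) (x : X) (θ : ℝ),
      HasDerivAt (fun θ => V n θ x)
        (∑ k ∈ Finset.range n, ∑ x',
          ρk θ k x x' * deriv (fun θ => p θ x') θ
            * (Q (n - k) θ x' true - Q (n - k) θ x' false)) θ := by
  intro n
  induction n with
  | zero =>
    intro x θ
    simp only [Finset.range_zero, Finset.sum_empty]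
    have h : (fun θ => V 0 θ x) = fun _ => 0 := funext fun θ => hV0 θ x
    rw [h]
    exact hasDerivAt_const θ 0
  | succ n ih =>
    intro x θ
    set D : ℕ → X → ℝ → ℝ := fun n x θ =>
      ∑ k ∈ Finset.range n, ∑ x',
        ρk θ k x x' * deriv (fun θ => p θ x') θ
          * (Q (n - k) θ x' true - Q (n - k) θ x' false) with hD
    have hfun : (fun θ => V (n+1) θ x)
        = fun θ => p θ x * (∑ x', P x true x' * (g x x' + V n θ x'))
          + (1 - p θ x) * (∑ x', P x false x' * (g x x' + V n θ x')) := by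
      funext θ
      rw [hVS, Fintype.sum_bool]
      simp
    have hp' : HasDerivAt (fun θ => p θ x) (deriv (fun θ => p θ x) θ) θ :=
      (hpdiff x θ).hasDerivAt
    have hB : HasDerivAt (fun θ => ∑ x', P x true x' * (g x x' + V n θ x'))
        (∑ x', P x true x' * D n x' θ) θ := by
      apply HasDerivAt.fun_sum
      intro x' _
      exact ((ih x' θ).const_add (g x x')).const_mul (P x true x')
    have hA : HasDerivAt (fun θ => ∑ x', P x false x' * (g x x' + V n θ x'))
        (∑ x', P x false x' * D n x' θ) θ := by
      apply HasDerivAt.fun_sum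
      intro x' _
      exact ((ih x' θ).const_add (g x x')).const_mul (P x false x')
    have hmain : HasDerivAt (fun θ => V (n+1) θ x)
        (deriv (fun θ => p θ x) θ * (∑ x', P x true x' * (g x x' + V n θ x'))
          + p θ x * (∑ x', P x true x' * D n x' θ)
          + ((0 - deriv (fun θ => p θ x) θ) * (∑ x', P x false x' * (g x x' + V n θ x'))
            + (1 - p θ x) * (∑ x', P x false x' * D n x' θ))) θ := by
      rw [hfun]
      exact (hp'.mul hB).add (((hasDerivAt_const θ (1:ℝ)).sub hp').mul hA)
    convert hmain using 1
    rw [Finset.sum_range_succ']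
    -- f 0 term
    have h0 : (∑ x', ρk θ 0 x x' * deriv (fun θ => p θ x') θ
        * (Q (n + 1 - 0) θ x' true - Q (n + 1 - 0) θ x' false))
        = deriv (fun θ => p θ x) θ
          * ((∑ x', P x true x' * (g x x' + V n θ x'))
            - (∑ x', P x false x' * (g x x' + V n θ x'))) := by
      simp only [hρk0]
      rw [Finset.sum_eq_single x]
      · simp [hQ]
      · intro b _ hb
        simp [Ne.symm hb]
      · simp
    -- shifted terms
    have hshift : (∑ k ∈ Finset.range n, ∑ x', ρk θ (k + 1) x x'
          * deriv (fun θ => p θ x') θ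
          * (Q (n + 1 - (k + 1)) θ x' true - Q (n + 1 - (k + 1)) θ x' false))
        = ∑ y, ρ θ x y * D n y θ := by
      rw [hD]
      rw [Finset.sum_comm]
      simp only [Nat.succ_sub_succ, hρkS, Finset.sum_mul, Finset.mul_sum]
      rw [Finset.sum_comm]
      conv_rhs => rw [Finset.sum_comm]
      refine Finset.sum_congr rfl fun k _ => ?_
      rw [Finset.sum_comm]
      exact Finset.sum_congr rfl fun y _ =>
        Finset.sum_congr rfl fun x' _ => by ring
    rw [h0, hshift]
    have hρsum : ∑ y, ρ θ x y * D n y θ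
        = (1 - p θ x) * (∑ x', P x false x' * D n x' θ)
          + p θ x * (∑ x', P x true x' * D n x' θ) := by
      simp only [hρ, Finset.mul_sum]
      rw [← Finset.sum_add_distrib]
      apply Finset.sum_congr rfl
      intro y _
      ring
    rw [hρsum]
    ring
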